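/- Let S = Q[x, y, z, w] and let I be the ideal of 2×2 minors of the matrix with rows (x, y, z, w) and (-y, x, -w, z). Then I is a nondegenerate prime ideal of height 2 with multiplicity e(S/I) = 2. -/

import Mathlib

open MvPolynomial Filter

noncomputable section Stmt17Aux

abbrev S4 := MvPolynomial (Fin 4) ℚ
abbrev S2C := MvPolynomial (Fin 2) ℂ

def phi17 : S4 →ₐ[ℚ] S2C :=
  aeval ![X 0, MvPolynomial.C Complex.I * X 0, X 1, MvPolynomial.C Complex.I * X 1]

def pA : S4 := X 0 ^ 2 + X 1 ^ 2
def pB : S4 := X 1 * X 2 - X 0 * X 3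
def pC : S4 := X 0 * X 2 + X 1 * X 3
def pE : S4 := X 2 ^ 2 + X 3 ^ 2

def I17 : Ideal S4 := Ideal.span {pA, pB, pC, pE}

lemma phi_pA : phi17 pA = 0 := by
  simp [phi17, pA]
  ring_nf
  simp [← MvPolynomial.C_pow, Complex.I_sq]

lemma phi_pB : phi17 pB = 0 := by
  simp [phi17, pB]; ring

lemma phi_pC : phi17 pC = 0 := by
  simp [phi17, pC]
  ring_nf
  simp [← MvPolynomial.C_pow, Complex.I_sq]

lemma phi_pE : phi17 pE = 0 := by
  simp [phi17, pE]
  ring_nf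
  simp [← MvPolynomial.C_pow, Complex.I_sq]

lemma I17_le_ker : I17 ≤ RingHom.ker phi17.toRingHom := by
  rw [I17, Ideal.span_le]
  rintro f (rfl | rfl | rfl | rfl) <;>
    simp [RingHom.mem_ker, phi_pA, phi_pB, phi_pC, phi_pE]


/-- Index type for the monomial basis of the complement `V`. -/
abbrev Idx17 := (ℕ × ℕ) ⊕ ((ℕ × ℕ) ⊕ ℕ)

def Bfam : Idx17 → S4
  | .inl (a, c) => X 0 ^ a * X 2 ^ c
  | .inr (.inl (a, c)) => X 1 * (X 0 ^ a * X 2 ^ c)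
  | .inr (.inr c) => X 3 * X 2 ^ c

def V17 : Submodule ℚ S4 := Submodule.span ℚ (Set.range Bfam)

abbrev JV17 : Submodule ℚ S4 := (Submodule.restrictScalars ℚ I17) ⊔ V17

lemma mem_JV_of_I {f : S4} (hf : f ∈ I17) : f ∈ JV17 :=
  Submodule.mem_sup_left hf

lemma mem_JV_of_V {f : S4} (hf : f ∈ V17) : f ∈ JV17 :=
  Submodule.mem_sup_right hf

lemma Bfam_mem_V (i : Idx17) : Bfam i ∈ V17 :=
  Submodule.subset_span ⟨i, rfl⟩

lemma step_JV {f g t r : S4} (hg : g ∈ I17) (hr : r ∈ JV17) (heq : f = g * t + r) :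
    f ∈ JV17 := by
  subst heq
  exact add_mem (mem_JV_of_I (Ideal.mul_mem_right t _ hg)) hr

lemma P_mem (n : ℕ) : ∀ a b c d : ℕ, 2 * d + b ≤ n →
    X 0 ^ a * X 1 ^ b * X 2 ^ c * X 3 ^ d ∈ JV17 := by
  induction n with
  | zero =>
    intro a b c d h
    have hb : b = 0 := by omega
    have hd : d = 0 := by omega
    subst hb; subst hd
    have : X 0 ^ a * X 1 ^ 0 * X 2 ^ c * X 3 ^ 0 = Bfam (.inl (a, c)) := by
      simp [Bfam]
    rw [this]
    exact mem_JV_of_V (Bfam_mem_V _)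
  | succ n IH =>
    intro a b c d h
    rcases d with _ | _ | d
    · -- d = 0
      rcases b with _ | _ | b
      · have : X 0 ^ a * X 1 ^ 0 * X 2 ^ c * X 3 ^ 0 = Bfam (.inl (a, c)) := by
          simp [Bfam]
        rw [this]; exact mem_JV_of_V (Bfam_mem_V _)
      · have : X 0 ^ a * X 1 ^ 1 * X 2 ^ c * X 3 ^ 0 = Bfam (.inr (.inl (a, c))) := by
          simp [Bfam]; ring
        rw [this]; exact mem_JV_of_V (Bfam_mem_V _)
      · -- b + 2 : use pA
        refine step_JV (g := pA) (t := X 0 ^ a * X 1 ^ b * X 2 ^ c)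
          (r := -(X 0 ^ (a+2) * X 1 ^ b * X 2 ^ c * X 3 ^ 0)) ?_ ?_ ?_
        · exact Ideal.subset_span (by simp)
        · exact neg_mem (IH (a+2) b c 0 (by omega))
        · rw [pA]; ring
    · -- d = 1
      rcases b with _ | b
      · rcases a with _ | a
        · have : X 0 ^ 0 * X 1 ^ 0 * X 2 ^ c * X 3 ^ 1 = Bfam (.inr (.inr c)) := by
            simp [Bfam]; ring
          rw [this]; exact mem_JV_of_V (Bfam_mem_V _)
        · -- x w : use -pB ; xw = yz - pB
          refine step_JV (g := -pB) (t := X 0 ^ a * X 2 ^ c)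
            (r := X 0 ^ a * X 1 ^ 1 * X 2 ^ (c+1) * X 3 ^ 0) ?_ ?_ ?_
          · exact neg_mem (Ideal.subset_span (by simp))
          · exact IH a 1 (c+1) 0 (by omega)
          · rw [pB]; ring
      · -- y w : use pC
        refine step_JV (g := pC) (t := X 0 ^ a * X 1 ^ b * X 2 ^ c)
          (r := -(X 0 ^ (a+1) * X 1 ^ b * X 2 ^ (c+1) * X 3 ^ 0)) ?_ ?_ ?_
        · exact Ideal.subset_span (by simp)
        · exact neg_mem (IH (a+1) b (c+1) 0 (by omega))
        · rw [pC]; ring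
    · -- d + 2 : use pE
      refine step_JV (g := pE) (t := X 0 ^ a * X 1 ^ b * X 2 ^ c * X 3 ^ d)
        (r := -(X 0 ^ a * X 1 ^ b * X 2 ^ (c+2) * X 3 ^ d)) ?_ ?_ ?_
      · exact Ideal.subset_span (by simp)
      · exact neg_mem (IH a b (c+2) d (by omega))
      · rw [pE]; ring

lemma mem_of_support {σ : Type*} {p : MvPolynomial σ ℚ} {W : Submodule ℚ (MvPolynomial σ ℚ)}
    (h : ∀ m ∈ p.support, (monomial m (1:ℚ)) ∈ W) : p ∈ W := by
  rw [p.as_sum]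
  refine Submodule.sum_mem _ fun m hm => ?_
  have : (monomial m (coeff m p)) = (coeff m p) • monomial m (1:ℚ) := by
    rw [smul_monomial, smul_eq_mul, mul_one]
  rw [this]
  exact Submodule.smul_mem _ _ (h m hm)

lemma monomial_eq_prod (m : Fin 4 →₀ ℕ) :
    (monomial m (1:ℚ) : S4) = X 0 ^ m 0 * X 1 ^ m 1 * X 2 ^ m 2 * X 3 ^ m 3 := by
  rw [monomial_eq, C_1, one_mul, Finsupp.prod_pow]
  rw [Fin.prod_univ_four]

lemma span_JV (f : S4) : f ∈ JV17 := by
  refine mem_of_support fun m _ => ?_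
  rw [monomial_eq_prod]
  exact P_mem (2 * m 3 + m 1) _ _ _ _ le_rfl


/-! ### Linear independence of the image family -/

def m2 (a c : ℕ) : Fin 2 →₀ ℕ := Finsupp.single 0 a + Finsupp.single 1 c

lemma m2_apply0 (a c : ℕ) : m2 a c 0 = a := by simp [m2]
lemma m2_apply1 (a c : ℕ) : m2 a c 1 = c := by simp [m2, Finsupp.single_apply]

lemma m2_inj {a c a' c' : ℕ} (h : m2 a c = m2 a' c') : a = a' ∧ c = c' := by
  constructor
  · rw [← m2_apply0 a c, ← m2_apply0 a' c', h]
  · rw [← m2_apply1 a c, ← m2_apply1 a' c', h]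

/-- the family of monomials with coefficient `1` or `I` -/
def cmon : (Fin 2 →₀ ℕ) × Bool → S2C
  | (m, false) => monomial m 1
  | (m, true) => monomial m Complex.I

lemma cmon_li : LinearIndependent ℚ cmon := by
  rw [linearIndependent_iff']
  intro s g hsum i hi
  have hco := congrArg (MvPolynomial.coeff i.1) hsum
  rw [MvPolynomial.coeff_zero] at hco
  rw [MvPolynomial.coeff_sum] at hco
  -- split the sum over pairs
  classical
  have key : ∀ j ∈ s, MvPolynomial.coeff i.1 (g j • cmon j) =
      if j = (i.1, false) then (g j : ℂ) else if j = (i.1, true) then (g j : ℂ) * Complex.I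
      else 0 := by
    rintro ⟨m, ε⟩ _
    rcases ε <;>
      simp [cmon, MvPolynomial.coeff_smul, MvPolynomial.coeff_monomial, Prod.ext_iff] <;>
      split <;> simp_all [Rat.smul_def] <;> ring
  rw [Finset.sum_congr rfl key] at hco
  rcases i with ⟨m, ε⟩
  have key2 : ∀ j ∈ s,
      (if j = (m, false) then ((g j : ℂ)) else if j = (m, true) then (g j : ℂ) * Complex.I
      else 0) =
      (if j = (m, false) then ((g (m, false) : ℂ)) else 0)
        + (if j = (m, true) then (g (m, true) : ℂ) * Complex.I else 0) := by
    intro j _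
    by_cases hj1 : j = (m, false)
    · subst hj1; simp
    · by_cases hj2 : j = (m, true)
      · subst hj2; simp
      · simp [hj1, hj2]
  rw [Finset.sum_congr rfl key2, Finset.sum_add_distrib, Finset.sum_ite_eq' s (m, false),
    Finset.sum_ite_eq' s (m, true)] at hco
  set q1 : ℚ := if (m, false) ∈ s then g (m, false) else 0 with hq1
  set q2 : ℚ := if (m, true) ∈ s then g (m, true) else 0 with hq2
  have hco' : (q1 : ℂ) + (q2 : ℂ) * Complex.I = 0 := by
    rw [hq1, hq2]
    push_cast [apply_ite (fun q : ℚ => (q : ℂ))]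
    simpa [ite_mul] using hco
  have hre := congrArg Complex.re hco'
  have him := congrArg Complex.im hco'
  simp [Complex.add_re, Complex.add_im] at hre him
  have hq10 : q1 = 0 := by exact_mod_cast hre
  have hq20 : q2 = 0 := by exact_mod_cast him
  rcases ε
  · rw [hq1] at hq10; simpa [hi] using hq10
  · rw [hq2] at hq20; simpa [hi] using hq20


def hmap : Idx17 → (Fin 2 →₀ ℕ) × Bool
  | .inl (a, c) => (m2 a c, false)
  | .inr (.inl (a, c)) => (m2 (a+1) c, true)
  | .inr (.inr c) => (m2 0 (c+1), true)

lemma hmap_inj : Function.Injective hmap := by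
  rintro (⟨a, c⟩ | ⟨a, c⟩ | c) (⟨a', c'⟩ | ⟨a', c'⟩ | c') h <;>
    simp [hmap, Prod.ext_iff] at h ⊢ <;>
    (have := m2_inj h; omega)

lemma mon2_eq (a c : ℕ) (r : ℂ) :
    (monomial (m2 a c) r : S2C) = MvPolynomial.C r * (X 0 ^ a * X 1 ^ c) := by
  rw [m2, X_pow_eq_monomial, X_pow_eq_monomial, monomial_mul, C_mul_monomial]
  simp

lemma phi_Bfam (i : Idx17) : phi17 (Bfam i) = cmon (hmap i) := by
  rcases i with ⟨a, c⟩ | ⟨a, c⟩ | c <;>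
    simp [Bfam, phi17, hmap, cmon, mon2_eq] <;> ring

lemma Bfam_img_li : LinearIndependent ℚ (phi17 ∘ Bfam) := by
  have : phi17 ∘ Bfam = cmon ∘ hmap := funext phi_Bfam
  rw [this]
  exact cmon_li.comp hmap hmap_inj

lemma Bfam_li : LinearIndependent ℚ Bfam :=
  LinearIndependent.of_comp phi17.toLinearMap Bfam_img_li

lemma inj_on_V {v : S4} (hv : v ∈ V17) (h0 : phi17 v = 0) : v = 0 := by
  rw [V17, Finsupp.mem_span_range_iff_exists_finsupp] at hv
  obtain ⟨c, rfl⟩ := hv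
  have : phi17 (c.sum fun i a => a • Bfam i) = c.sum fun i a => a • (phi17 ∘ Bfam) i := by
    rw [map_finsuppSum]
    exact Finsupp.sum_congr fun i _ => by simp
  rw [this] at h0
  have := linearIndependent_iff.mp Bfam_img_li c (by simpa [Finsupp.linearCombination] using h0)
  simp [this]

lemma ker_eq : RingHom.ker phi17.toRingHom = I17 := by
  refine le_antisymm ?_ I17_le_ker
  intro f hf
  obtain ⟨j, hj, v, hv, rfl⟩ := Submodule.mem_sup.mp (span_JV f)
  have hj0 : phi17 j = 0 := I17_le_ker hj
  have : phi17 v = 0 := by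
    have := RingHom.mem_ker.mp hf
    simp only [AlgHom.toRingHom_eq_coe, RingHom.coe_coe] at this
    rw [map_add, hj0, zero_add] at this
    exact this
  rw [inj_on_V hv this, add_zero]
  exact hj

lemma mem_I17_iff {f : S4} : f ∈ I17 ↔ phi17 f = 0 := by
  rw [← ker_eq]; exact RingHom.mem_ker


/-! ### Homogeneity -/

lemma phi_homog {p : S4} {k : ℕ} (hp : p.IsHomogeneous k) :
    (phi17 p).IsHomogeneous k := by
  have := hp.aeval (![X 0, MvPolynomial.C Complex.I * X 0, X 1,
      MvPolynomial.C Complex.I * X 1] : Fin 4 → S2C) (n := 1) ?_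
  · simpa [phi17] using this
  · intro i
    fin_cases i <;> simp <;>
      first
        | exact isHomogeneous_X _ _
        | exact isHomogeneous_C_mul_X _ _

lemma hc_ker {f : S4} (hf : phi17 f = 0) (n : ℕ) :
    phi17 (homogeneousComponent n f) = 0 := by
  rcases le_or_gt n f.totalDegree with hn | hn
  · have hdec := f.sum_homogeneousComponent
    have h0 : (0 : S2C) = ∑ i ∈ Finset.range (f.totalDegree + 1),
        phi17 (homogeneousComponent i f) := by
      rw [← map_sum, hdec, hf]
    have h2 := congrArg (homogeneousComponent n) h0
    rw [map_sum, map_zero] at h2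
    have h3 : ∀ i ∈ Finset.range (f.totalDegree + 1),
        homogeneousComponent n (phi17 (homogeneousComponent i f)) =
          if n = i then phi17 (homogeneousComponent i f) else 0 := by
      intro i _
      exact homogeneousComponent_of_mem (phi_homog (homogeneousComponent_isHomogeneous i f))
    rw [Finset.sum_congr rfl h3, Finset.sum_ite_eq (Finset.range (f.totalDegree + 1)) n] at h2
    rw [if_pos (Finset.mem_range.mpr (by omega))] at h2
    exact h2.symm
  · rw [homogeneousComponent_eq_zero _ _ hn, map_zero]

/-- degree of the elements of the distinguished family -/
def bdeg : Idx17 → ℕ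
  | .inl (a, c) => a + c
  | .inr (.inl (a, c)) => a + c + 1
  | .inr (.inr c) => c + 1

lemma Bfam_homog (i : Idx17) : (Bfam i).IsHomogeneous (bdeg i) := by
  rcases i with ⟨a, c⟩ | ⟨a, c⟩ | c
  · have := (isHomogeneous_X_pow (R := ℚ) (0 : Fin 4) a).mul (isHomogeneous_X_pow (R := ℚ) (2 : Fin 4) c)
    simpa [Bfam, bdeg] using this
  · have := (isHomogeneous_X ℚ (1 : Fin 4)).mul
      ((isHomogeneous_X_pow (R := ℚ) (0 : Fin 4) a).mul (isHomogeneous_X_pow (R := ℚ) (2 : Fin 4) c))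
    simpa [Bfam, bdeg, add_comm] using this
  · have := (isHomogeneous_X ℚ (3 : Fin 4)).mul (isHomogeneous_X_pow (R := ℚ) (2 : Fin 4) c)
    simpa [Bfam, bdeg, add_comm] using this

lemma hc_V {v : S4} (hv : v ∈ V17) (n : ℕ) : homogeneousComponent n v ∈ V17 := by
  induction hv using Submodule.span_induction with
  | mem g hg =>
    obtain ⟨i, rfl⟩ := hg
    rw [homogeneousComponent_of_mem (by rw [mem_homogeneousSubmodule]; exact Bfam_homog i)]
    split
    · exact Bfam_mem_V i
    · exact zero_mem _
  | zero => rw [map_zero]; exact zero_mem _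
  | add g h _ _ hg hh => rw [map_add]; exact add_mem hg hh
  | smul q g _ hg => rw [map_smul]; exact Submodule.smul_mem _ _ hg


/-! ### finite dimensionality and graded pieces -/

abbrev Sn (n : ℕ) : Submodule ℚ S4 := homogeneousSubmodule (Fin 4) ℚ n
abbrev J17 : Submodule ℚ S4 := Submodule.restrictScalars ℚ I17

def gmon (k N : ℕ) : (Fin k → Fin (N+1)) → MvPolynomial (Fin k) ℚ :=
  fun t => monomial (Finsupp.equivFunOnFinite.symm fun i => (t i : ℕ)) 1

lemma mem_span_gmon {k N : ℕ} {p : MvPolynomial (Fin k) ℚ}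
    (h : ∀ m ∈ p.support, ∀ i, m i ≤ N) :
    p ∈ Submodule.span ℚ (Set.range (gmon k N)) := by
  refine mem_of_support fun m hm => Submodule.subset_span ?_
  refine ⟨fun i => ⟨m i, by have := h m hm i; omega⟩, ?_⟩
  show monomial (Finsupp.equivFunOnFinite.symm fun i => (m i)) (1:ℚ) = monomial m 1
  exact congrArg (fun z => monomial z (1:ℚ)) (Finsupp.equivFunOnFinite_symm_coe m)

lemma fd_Sn (n : ℕ) : FiniteDimensional ℚ (Sn n) := by
  have hle : Sn n ≤ Submodule.span ℚ (Set.range (gmon 4 n)) := by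
    intro p hp
    refine mem_span_gmon fun m hm i => ?_
    have h1 : m.degree = n := by
      rw [Finsupp.degree_eq_weight_one]
      exact hp (MvPolynomial.mem_support_iff.mp hm)
    calc m i ≤ m.degree := Finsupp.le_degree i m
    _ = n := h1
  have : FiniteDimensional ℚ (Submodule.span ℚ (Set.range (gmon 4 n))) :=
    FiniteDimensional.span_of_finite ℚ (Set.finite_range _)
  exact Submodule.finiteDimensional_of_le hle

lemma Sn_le_sup (n : ℕ) : Sn n ≤ (J17 ⊓ Sn n) ⊔ (V17 ⊓ Sn n) := by
  intro p hp
  obtain ⟨j, hj, v, hv, hsum⟩ := Submodule.mem_sup.mp (span_JV p)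
  have hph : homogeneousComponent n p = p := by
    rw [homogeneousComponent_of_mem hp, if_pos rfl]
  have hdec : p = homogeneousComponent n j + homogeneousComponent n v := by
    rw [← map_add, hsum, hph]
  refine Submodule.mem_sup.mpr ⟨homogeneousComponent n j, ⟨?_, homogeneousComponent_mem n j⟩,
    homogeneousComponent n v, ⟨hc_V hv n, homogeneousComponent_mem n v⟩, hdec.symm⟩
  have hj' : phi17 j = 0 := mem_I17_iff.mp hj
  exact mem_I17_iff.mpr (hc_ker hj' n)

lemma JV_inf {f : S4} (h1 : f ∈ J17) (h2 : f ∈ V17) : f = 0 :=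
  inj_on_V h2 (mem_I17_iff.mp h1)

def hidxn (n : ℕ) : (Fin (n+1) ⊕ (Fin n ⊕ Fin 1)) → Idx17
  | .inl a => .inl ((a : ℕ), n - a)
  | .inr (.inl a) => .inr (.inl ((a : ℕ), n - 1 - a))
  | .inr (.inr _) => .inr (.inr (n-1))

lemma hidxn_inj (n : ℕ) : Function.Injective (hidxn n) := by
  rintro (a | a | a) (a' | a' | a') h <;>
    simp [hidxn, Prod.ext_iff] at h ⊢ <;>
    first
      | (exact Fin.ext (by omega))
      | rfl

lemma bdeg_hidxn (n : ℕ) (hn : 1 ≤ n) (j : Fin (n+1) ⊕ (Fin n ⊕ Fin 1)) :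
    bdeg (hidxn n j) = n := by
  rcases j with a | a | a <;>
    simp [hidxn, bdeg] <;>
    first
      | (have := a.isLt; omega)
      | omega

lemma Gn_mem (n : ℕ) (hn : 1 ≤ n) (j : Fin (n+1) ⊕ (Fin n ⊕ Fin 1)) :
    Bfam (hidxn n j) ∈ V17 ⊓ Sn n := by
  refine ⟨Bfam_mem_V _, ?_⟩
  have h2 := Bfam_homog (hidxn n j)
  rw [bdeg_hidxn n hn j] at h2
  exact h2

lemma Vn_le_span (n : ℕ) (hn : 1 ≤ n) :
    V17 ⊓ Sn n ≤ Submodule.span ℚ (Set.range (Bfam ∘ hidxn n)) := by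
  rintro v ⟨hv1, hv2⟩
  obtain ⟨c, rfl⟩ := Finsupp.mem_span_range_iff_exists_finsupp.mp hv1
  set v : S4 := c.sum fun i a => a • Bfam i with hv
  have hvh : v = homogeneousComponent n v := by
    rw [homogeneousComponent_of_mem hv2, if_pos rfl]
  rw [hvh, hv, Finsupp.sum, map_sum]
  refine Submodule.sum_mem _ fun i hi => ?_
  rw [map_smul]
  refine Submodule.smul_mem _ _ ?_
  rw [homogeneousComponent_of_mem (mem_homogeneousSubmodule _ _ |>.mpr (Bfam_homog i))]
  split
  · rename_i hdeg
    refine Submodule.subset_span ?_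
    rcases i with ⟨a, c'⟩ | ⟨a, c'⟩ | c'
    · refine ⟨.inl ⟨a, by simp [bdeg] at hdeg; omega⟩, ?_⟩
      simp only [Function.comp]
      congr 2
      simp [hidxn, bdeg] at hdeg ⊢
      omega
    · refine ⟨.inr (.inl ⟨a, by simp [bdeg] at hdeg; omega⟩), ?_⟩
      simp only [Function.comp]
      congr 2
      simp [hidxn, bdeg] at hdeg ⊢
      omega
    · refine ⟨.inr (.inr ⟨0, by omega⟩), ?_⟩
      simp only [Function.comp]
      congr 2
      simp [hidxn, bdeg] at hdeg ⊢
      omega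
  · exact zero_mem _

lemma Vn_eq (n : ℕ) (hn : 1 ≤ n) :
    V17 ⊓ Sn n = Submodule.span ℚ (Set.range (Bfam ∘ hidxn n)) := by
  refine le_antisymm (Vn_le_span n hn) ?_
  rw [Submodule.span_le]
  rintro _ ⟨j, rfl⟩
  exact Gn_mem n hn j

lemma Vn_finrank (n : ℕ) (hn : 1 ≤ n) :
    Module.finrank ℚ (V17 ⊓ Sn n : Submodule ℚ S4) = 2 * n + 2 := by
  rw [Vn_eq n hn, finrank_span_eq_card (Bfam_li.comp (hidxn n) (hidxn_inj n))]
  simp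
  omega

lemma hilb_eq (n : ℕ) (hn : 1 ≤ n) :
    Module.finrank ℚ (Sn n) =
      Module.finrank ℚ (J17 ⊓ Sn n : Submodule ℚ S4) + (2 * n + 2) := by
  have fdS : FiniteDimensional ℚ (Sn n) := fd_Sn n
  have fd1 : FiniteDimensional ℚ (J17 ⊓ Sn n : Submodule ℚ S4) :=
    Submodule.finiteDimensional_of_le inf_le_right
  have fd2 : FiniteDimensional ℚ (V17 ⊓ Sn n : Submodule ℚ S4) :=
    Submodule.finiteDimensional_of_le inf_le_right
  have hsup : (J17 ⊓ Sn n) ⊔ (V17 ⊓ Sn n) = Sn n :=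
    le_antisymm (sup_le inf_le_right inf_le_right) (Sn_le_sup n)
  have hinf : (J17 ⊓ Sn n) ⊓ (V17 ⊓ Sn n) = ⊥ := by
    rw [eq_bot_iff]
    rintro f ⟨⟨h1, _⟩, ⟨h2, _⟩⟩
    simp [JV_inf h1 h2]
  have hadd := Submodule.finrank_sup_add_finrank_inf_eq (J17 ⊓ Sn n) (V17 ⊓ Sn n)
  rw [hsup, hinf, finrank_bot, Vn_finrank n hn] at hadd
  omega


/-! ### no 5 algebraically independent elements in a quotient of `S4` -/

lemma apply_le_sum {k : ℕ} (m : Fin k →₀ ℕ) (i : Fin k) : m i ≤ m.sum fun _ e => e := by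
  by_cases h : i ∈ m.support
  · exact Finset.single_le_sum (f := fun a => m a) (fun _ _ => Nat.zero_le _) h
  · simp [Finsupp.notMem_support_iff.mp h]

lemma gmon_li (k N : ℕ) : LinearIndependent ℚ (gmon k N) := by
  have hinj : Function.Injective
      (fun t : Fin k → Fin (N+1) => Finsupp.equivFunOnFinite.symm fun i => (t i : ℕ)) := by
    intro t t' h
    have := Finsupp.equivFunOnFinite.symm.injective h
    funext i
    exact Fin.ext (congrFun this i)
  have := ((MvPolynomial.basisMonomials (Fin k) ℚ).linearIndependent).comp _ hinj
  rw [coe_basisMonomials] at this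
  exact this

lemma no_five_indep (p : Ideal S4) (a : Fin 5 → S4 ⧸ p)
    (ha : AlgebraicIndependent ℚ a) : False := by
  classical
  have hsurj : ∀ i, ∃ f : S4, Ideal.Quotient.mk p f = a i :=
    fun i => Ideal.Quotient.mk_surjective (a i)
  choose f hf using hsurj
  set D : ℕ := (Finset.univ.sup fun i => (f i).totalDegree) + 1 with hD
  have hfD : ∀ i, (f i).totalDegree ≤ D := by
    intro i
    exact Nat.le_succ_of_le (Finset.le_sup (f := fun i => (f i).totalDegree) (Finset.mem_univ i))
  set e : ℕ := (5 * D + 1) ^ 4 with he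
  set N : ℕ := 5 * (e * D) with hN
  -- the linearly independent family
  have hAinj : Function.Injective (aeval a : MvPolynomial (Fin 5) ℚ →ₐ[ℚ] S4 ⧸ p) :=
    algebraicIndependent_iff_injective_aeval.mp ha
  have hli : LinearIndependent ℚ ((aeval a : MvPolynomial (Fin 5) ℚ →ₐ[ℚ] S4 ⧸ p) ∘ gmon 5 e) :=
    (gmon_li 5 e).map' (aeval a).toLinearMap (LinearMap.ker_eq_bot.mpr hAinj)
  -- the containing span
  set W : Submodule ℚ (S4 ⧸ p) :=
    Submodule.span ℚ (Set.range fun u : Fin 4 → Fin (N+1) =>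
      Ideal.Quotient.mk p (gmon 4 N u)) with hW
  have hWfd : FiniteDimensional ℚ W :=
    FiniteDimensional.span_of_finite ℚ (Set.finite_range _)
  have hmem : ∀ t : Fin 5 → Fin (e+1), (aeval a) (gmon 5 e t) ∈ W := by
    intro t
    have h1 : (aeval a) (gmon 5 e t) = Ideal.Quotient.mk p (∏ i, f i ^ (t i : ℕ)) := by
      rw [gmon, aeval_monomial, map_one, one_mul, Finsupp.prod_pow]
      rw [map_prod]
      refine Finset.prod_congr rfl fun i _ => ?_
      rw [map_pow, hf]
      congr 1
    rw [h1]
    have h2 : (∏ i, f i ^ (t i : ℕ)) ∈ Submodule.span ℚ (Set.range (gmon 4 N)) := by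
      refine mem_span_gmon fun m hm i => ?_
      have h3 : (m.sum fun _ e => e) ≤ (∏ i, f i ^ (t i : ℕ)).totalDegree :=
        le_totalDegree hm
      have h4 : (∏ i, f i ^ (t i : ℕ)).totalDegree ≤ N := by
        refine le_trans (totalDegree_finset_prod _ _) ?_
        refine le_trans (Finset.sum_le_sum fun i _ => totalDegree_pow (f i) (t i : ℕ)) ?_
        have : ∀ i : Fin 5, (t i : ℕ) * (f i).totalDegree ≤ e * D := fun i =>
          Nat.mul_le_mul (by have := (t i).isLt; omega) (hfD i)
        calc (∑ i, (t i : ℕ) * (f i).totalDegree) ≤ ∑ _i : Fin 5, e * D :=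
              Finset.sum_le_sum fun i _ => this i
        _ = 5 * (e * D) := by simp [Finset.sum_const, mul_comm]
        _ = N := rfl
      exact le_trans (le_trans (apply_le_sum m i) h3) h4
    have h5 := Submodule.mem_map_of_mem
      (f := (Ideal.Quotient.mkₐ ℚ p).toLinearMap) h2
    rw [Submodule.map_span, ← Set.range_comp] at h5
    exact h5
  -- counting
  have hcount : ((e:ℕ)+1)^5 ≤ (N+1)^4 := by
    have hres : LinearIndependent ℚ fun t : Fin 5 → Fin (e+1) =>
        (⟨(aeval a) (gmon 5 e t), hmem t⟩ : W) := by
      refine LinearIndependent.of_comp W.subtype ?_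
      exact hli
    have hcard := hres.fintype_card_le_finrank
    rw [Fintype.card_fun] at hcard
    simp only [Fintype.card_fin] at hcard
    refine le_trans hcard ?_
    have hle := finrank_span_le_card (R := ℚ)
      (Set.range fun u : Fin 4 → Fin (N+1) => Ideal.Quotient.mk p (gmon 4 N u))
    rw [Set.toFinset_range] at hle
    refine le_trans hle (le_trans (Finset.card_image_le) ?_)
    rw [Finset.card_univ, Fintype.card_fun]
    simp
  -- arithmetic contradiction
  have harith : (N+1)^4 < (e+1)^5 := by
    have h1 : N + 1 ≤ (5*D+1) * e := by
      have hD1 : 1 ≤ D := by omega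
      have he1 : 1 ≤ e := Nat.one_le_pow _ _ (by omega)
      calc N + 1 = 5 * (e * D) + 1 := rfl
      _ ≤ 5 * D * e + e := by nlinarith
      _ = (5*D+1) * e := by ring
    calc (N+1)^4 ≤ ((5*D+1) * e)^4 := Nat.pow_le_pow_left h1 4
    _ = (5*D+1)^4 * e^4 := by ring
    _ = e * e^4 := by rw [← he]
    _ = e^5 := by ring
    _ < (e+1)^5 := Nat.pow_lt_pow_left (by omega) (by omega)
  omega


/-! ### lifting algebraic independence along a chain of primes -/

section Lift

variable {B : Type} [CommRing B] [IsDomain B] [Algebra ℚ B]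
variable {ι : Type}

lemma eval2_zero_ind {p q : Ideal B} [hp : p.IsPrime] (hpq : p ≤ q)
    (b : ι → B) (g : B) (hgq : g ∈ q) (hgp : g ∉ p)
    (h : AlgebraicIndependent ℚ fun i => Ideal.Quotient.mk q (b i)) :
    ∀ n (Q : Polynomial (MvPolynomial ι ℚ)), Q.natDegree ≤ n →
      Polynomial.eval₂ ((aeval fun i => Ideal.Quotient.mk p (b i)) :
          MvPolynomial ι ℚ →ₐ[ℚ] B ⧸ p).toRingHom (Ideal.Quotient.mk p g) Q = 0 →
      Q = 0 := by
  have key : ∀ Q : Polynomial (MvPolynomial ι ℚ),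
      Polynomial.eval₂ ((aeval fun i => Ideal.Quotient.mk p (b i)) :
          MvPolynomial ι ℚ →ₐ[ℚ] B ⧸ p).toRingHom (Ideal.Quotient.mk p g) Q = 0 →
      Q.coeff 0 = 0 := by
    intro Q hQ
    have h2 := congrArg (Ideal.Quotient.factor hpq) hQ
    rw [Polynomial.hom_eval₂, map_zero] at h2
    rw [Ideal.Quotient.factor_mk, Ideal.Quotient.eq_zero_iff_mem.mpr hgq] at h2
    rw [Polynomial.eval₂_at_zero] at h2
    have h3 : ((Ideal.Quotient.factor hpq).comp
        ((aeval fun i => Ideal.Quotient.mk p (b i)) :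
          MvPolynomial ι ℚ →ₐ[ℚ] B ⧸ p).toRingHom) =
        ((aeval fun i => Ideal.Quotient.mk q (b i)) :
          MvPolynomial ι ℚ →ₐ[ℚ] B ⧸ q).toRingHom := by
      apply MvPolynomial.ringHom_ext
      · intro r
        simp only [RingHom.comp_apply, AlgHom.toRingHom_eq_coe, RingHom.coe_coe, aeval_C]
        have : ∀ (J : Ideal B), algebraMap ℚ (B ⧸ J) r =
            Ideal.Quotient.mk J (algebraMap ℚ B r) := fun J => rfl
        rw [this p, this q, Ideal.Quotient.factor_mk]
      · intro i
        simp only [RingHom.comp_apply, AlgHom.toRingHom_eq_coe, RingHom.coe_coe, aeval_X]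
        rw [Ideal.Quotient.factor_mk]
    rw [h3] at h2
    exact h.eq_zero_of_aeval_eq_zero _ h2
  intro n
  induction n with
  | zero =>
    intro Q hdeg hQ
    rw [Polynomial.eq_C_of_natDegree_le_zero hdeg, key Q hQ, map_zero]
  | succ n IH =>
    intro Q hdeg hQ
    have hc0 := key Q hQ
    have hfact : Q = Polynomial.X * Q.divX := by
      have := Polynomial.X_mul_divX_add Q
      rw [hc0, map_zero, add_zero] at this
      exact this.symm
    have hdiv : Polynomial.eval₂ ((aeval fun i => Ideal.Quotient.mk p (b i)) :
        MvPolynomial ι ℚ →ₐ[ℚ] B ⧸ p).toRingHom (Ideal.Quotient.mk p g) Q.divX = 0 := by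
      rw [hfact, Polynomial.eval₂_mul, Polynomial.eval₂_X] at hQ
      have hg0 : Ideal.Quotient.mk p g ≠ 0 := fun hh =>
        hgp (Ideal.Quotient.eq_zero_iff_mem.mp hh)
      exact (mul_eq_zero.mp hQ).resolve_left hg0
    have : Q.divX = 0 := IH Q.divX
      (by rw [Polynomial.natDegree_divX_eq_natDegree_tsub_one]; omega) hdiv
    rw [hfact, this, mul_zero]

lemma indep_lift {p q : Ideal B} [hp : p.IsPrime] (hpq : p ≤ q)
    (b : ι → B) (g : B) (hgq : g ∈ q) (hgp : g ∉ p)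
    (h : AlgebraicIndependent ℚ fun i => Ideal.Quotient.mk q (b i)) :
    AlgebraicIndependent ℚ fun o : Option ι => Ideal.Quotient.mk p (o.elim g b) := by
  rw [algebraicIndependent_iff]
  intro P hP
  -- transport to a polynomial over `MvPolynomial ι ℚ`
  have EQ : ((aeval fun o : Option ι => Ideal.Quotient.mk p (o.elim g b) :
      MvPolynomial (Option ι) ℚ →ₐ[ℚ] B ⧸ p)).toRingHom =
      (Polynomial.eval₂RingHom ((aeval fun i => Ideal.Quotient.mk p (b i)) :
          MvPolynomial ι ℚ →ₐ[ℚ] B ⧸ p).toRingHom (Ideal.Quotient.mk p g)).comp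
        (optionEquivLeft ℚ ι : MvPolynomial (Option ι) ℚ ≃ₐ[ℚ] _).toAlgHom.toRingHom := by
    apply MvPolynomial.ringHom_ext
    · intro r
      simp [optionEquivLeft_C]
    · rintro (_ | i)
      · simp [optionEquivLeft_X_none]
      · simp [optionEquivLeft_X_some]
  have h2 : Polynomial.eval₂ ((aeval fun i => Ideal.Quotient.mk p (b i)) :
      MvPolynomial ι ℚ →ₐ[ℚ] B ⧸ p).toRingHom (Ideal.Quotient.mk p g)
      (optionEquivLeft ℚ ι P) = 0 := by
    have h4 := congrArg (fun (F : MvPolynomial (Option ι) ℚ →+* B ⧸ p) => F P) EQ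
    simp only [RingHom.comp_apply, Polynomial.coe_eval₂RingHom] at h4
    exact h4.symm.trans hP
  have h3 := eval2_zero_ind hpq b g hgq hgp h (optionEquivLeft ℚ ι P).natDegree
    (optionEquivLeft ℚ ι P) le_rfl h2
  exact (optionEquivLeft ℚ ι).injective (by rw [h3, map_zero])

end Lift


/-! ### primality and height bounds -/

lemma I17_prime : I17.IsPrime := ker_eq ▸ RingHom.ker_isPrime _

lemma mem_pA : pA ∈ I17 := Ideal.subset_span (by simp)
lemma mem_pB : pB ∈ I17 := Ideal.subset_span (by simp)
lemma mem_pC : pC ∈ I17 := Ideal.subset_span (by simp)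
lemma mem_pE : pE ∈ I17 := Ideal.subset_span (by simp)

lemma mem_of_eq {d g : S4} (hg : g ∈ I17) (h : d = g) : d ∈ I17 := h ▸ hg

def psi17 : S4 →ₐ[ℚ] MvPolynomial (Fin 3) ℂ :=
  aeval ![X 0, MvPolynomial.C Complex.I * X 0, X 1, X 2]

def theta17 : MvPolynomial (Fin 3) ℂ →ₐ[ℂ] S2C :=
  aeval ![X 0, X 1, MvPolynomial.C Complex.I * X 1]

lemma psi_pA : psi17 pA = 0 := by
  simp [psi17, pA]
  ring_nf
  simp [← MvPolynomial.C_pow, Complex.I_sq]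

lemma pA_ne : (pA : S4) ≠ 0 := by
  intro h
  have := congrArg (coeff (Finsupp.single 0 2)) h
  simp [pA, coeff_X_pow, Finsupp.single_eq_single_iff] at this

lemma psi_pE_ne : psi17 pE ≠ 0 := by
  intro h
  have h2 : psi17 pE = X 1 ^ 2 + X 2 ^ 2 := by simp [psi17, pE]
  rw [h2] at h
  have := congrArg (coeff (Finsupp.single 1 2)) h
  simp [coeff_X_pow, Finsupp.single_eq_single_iff] at this

lemma theta_psi (f : S4) : theta17 (psi17 f) = phi17 f := by
  have hcomp : (theta17.toRingHom.comp psi17.toRingHom) = phi17.toRingHom := by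
    apply MvPolynomial.ringHom_ext
    · intro r
      simp [theta17, psi17, phi17]
    · intro i
      fin_cases i <;> simp [theta17, psi17, phi17]
  exact RingHom.congr_fun hcomp f

lemma ker_psi_le : RingHom.ker psi17.toRingHom ≤ I17 := by
  intro f hf
  rw [mem_I17_iff, ← theta_psi]
  rw [RingHom.mem_ker] at hf
  simp only [AlgHom.toRingHom_eq_coe, RingHom.coe_coe] at hf
  rw [hf, map_zero]

lemma base_indep :
    AlgebraicIndependent ℚ (fun i : Fin 2 => Ideal.Quotient.mk I17 (![X 0, X 2] i)) := by
  have hX : AlgebraicIndependent ℚ (X : Fin 2 → S2C) :=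
    (MvPolynomial.algebraicIndependent_X (Fin 2) ℂ).restrictScalars
      ((algebraMap ℚ ℂ).injective)
  have h0 : ∀ a ∈ I17, phi17 a = 0 := fun a ha => mem_I17_iff.mp ha
  refine AlgebraicIndependent.of_comp (Ideal.Quotient.liftₐ I17 phi17 h0) ?_
  have hcomp : (⇑(Ideal.Quotient.liftₐ I17 phi17 h0) ∘
      fun i : Fin 2 => Ideal.Quotient.mk I17 (![X 0, X 2] i)) = (X : Fin 2 → S2C) := by
    funext i
    fin_cases i <;> simp only [Function.comp_apply, Ideal.Quotient.liftₐ_apply, Ideal.Quotient.lift_mk] <;> simp [phi17]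
  rw [hcomp]
  exact hX

lemma chain_contradiction (q0 q1 q2 : Ideal S4) [h0 : q0.IsPrime] [h1 : q1.IsPrime]
    [h2 : q2.IsPrime] (h01 : q0 < q1) (h12 : q1 < q2) (h2I : q2 < I17) : False := by
  classical
  obtain ⟨g2, hg2I, hg2⟩ := SetLike.exists_of_lt h2I
  have step2 := indep_lift (le_of_lt h2I) (![X 0, X 2]) g2 hg2I hg2 base_indep
  obtain ⟨g1, hg1I, hg1⟩ := SetLike.exists_of_lt h12
  have step1 := indep_lift (le_of_lt h12) (fun o : Option (Fin 2) => o.elim g2 ![X 0, X 2])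
    g1 hg1I hg1 step2
  obtain ⟨g0, hg0I, hg0⟩ := SetLike.exists_of_lt h01
  have step0 := indep_lift (le_of_lt h01)
    (fun o : Option (Option (Fin 2)) => o.elim g1 fun o' => o'.elim g2 ![X 0, X 2])
    g0 hg0I hg0 step1
  have e : Option (Option (Option (Fin 2))) ≃ Fin 5 := Fintype.equivFinOfCardEq (by simp)
  exact no_five_indep q0 _ ((algebraicIndependent_equiv e.symm).mpr step0)

lemma height_eq_two : Order.height (⟨I17, I17_prime⟩ : PrimeSpectrum S4) = 2 := by
  refine le_antisymm ?_ ?_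
  · refine Order.height_le fun s hlast => ?_
    by_contra hgt
    push_neg at hgt
    have h2' : (2 : ℕ) < s.length := by exact_mod_cast hgt
    set n := s.length with hn
    have hq3 : s.toFun ⟨n, by omega⟩ = (⟨I17, I17_prime⟩ : PrimeSpectrum S4) := hlast
    set Q0 := s.toFun ⟨n - 3, by omega⟩ with hQ0
    set Q1 := s.toFun ⟨n - 2, by omega⟩ with hQ1
    set Q2 := s.toFun ⟨n - 1, by omega⟩ with hQ2
    have h01 : Q0 < Q1 := s.strictMono (by rw [Fin.mk_lt_mk]; omega)
    have h12 : Q1 < Q2 := s.strictMono (by rw [Fin.mk_lt_mk]; omega)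
    have h2I : Q2 < (⟨I17, I17_prime⟩ : PrimeSpectrum S4) := by
      rw [← hq3]
      exact s.strictMono (by rw [Fin.mk_lt_mk]; omega)
    haveI := Q0.isPrime
    haveI := Q1.isPrime
    haveI := Q2.isPrime
    exact chain_contradiction Q0.asIdeal Q1.asIdeal Q2.asIdeal h01 h12 h2I
  · haveI : (RingHom.ker psi17.toRingHom).IsPrime := RingHom.ker_isPrime _
    set P0 : PrimeSpectrum S4 := ⟨⊥, Ideal.bot_prime⟩ with hP0
    set P1 : PrimeSpectrum S4 := ⟨RingHom.ker psi17.toRingHom, inferInstance⟩ with hP1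
    set PI : PrimeSpectrum S4 := ⟨I17, I17_prime⟩ with hPI
    have h01 : P0 < P1 := by
      show P0.asIdeal < P1.asIdeal
      rw [hP0, hP1]
      simp only [bot_lt_iff_ne_bot]
      intro hbot
      have hmem : pA ∈ RingHom.ker psi17.toRingHom := by
        rw [RingHom.mem_ker]
        simpa using psi_pA
      rw [hbot] at hmem
      exact pA_ne (by simpa using hmem)
    have h1I : P1 < PI := by
      show P1.asIdeal < PI.asIdeal
      refine lt_of_le_of_ne ker_psi_le ?_
      intro heq
      have hmem : pE ∈ RingHom.ker psi17.toRingHom := by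
        show pE ∈ P1.asIdeal
        rw [heq]
        exact mem_pE
      rw [RingHom.mem_ker] at hmem
      exact psi_pE_ne (by simpa using hmem)
    let c : LTSeries (PrimeSpectrum S4) :=
      ⟨2, ![P0, P1, PI], by
        intro i
        fin_cases i
        · simpa using h01
        · simpa using h1I⟩
    have hlast : c.last = PI := rfl
    have := Order.length_le_height_last (p := c)
    rw [hlast] at this
    exact this


lemma deg1_in_V {f : S4} (hf : f.IsHomogeneous 1) : f ∈ V17 := by
  refine mem_of_support fun m hm => ?_
  have hdeg : (Finsupp.weight 1) m = 1 := hf (mem_support_iff.mp hm)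
  have hdeg' : m.degree = 1 := by rw [Finsupp.degree_eq_weight_one]; exact hdeg
  have hsum : ∑ i : Fin 4, m i = 1 := by
    rw [← hdeg', Finsupp.degree]
    exact (Finset.sum_subset (Finset.subset_univ _)
      (fun i _ hni => Finsupp.notMem_support_iff.mp hni)).symm
  have hs4 : m 0 + m 1 + m 2 + m 3 = 1 := by
    rw [← Fin.sum_univ_four (fun i => m i)]
    exact hsum
  rw [monomial_eq_prod]
  obtain ⟨h0, h1, h2, h3⟩ | ⟨h0, h1, h2, h3⟩ | ⟨h0, h1, h2, h3⟩ | ⟨h0, h1, h2, h3⟩ :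
      (m 0 = 1 ∧ m 1 = 0 ∧ m 2 = 0 ∧ m 3 = 0) ∨ (m 0 = 0 ∧ m 1 = 1 ∧ m 2 = 0 ∧ m 3 = 0) ∨
      (m 0 = 0 ∧ m 1 = 0 ∧ m 2 = 1 ∧ m 3 = 0) ∨
      (m 0 = 0 ∧ m 1 = 0 ∧ m 2 = 0 ∧ m 3 = 1) := by omega
  · rw [h0, h1, h2, h3]
    have : (X 0 ^ 1 * X 1 ^ 0 * X 2 ^ 0 * X 3 ^ 0 : S4) = Bfam (.inl (1, 0)) := by
      simp [Bfam]
    rw [this]; exact Bfam_mem_V _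
  · rw [h0, h1, h2, h3]
    have : (X 0 ^ 0 * X 1 ^ 1 * X 2 ^ 0 * X 3 ^ 0 : S4) = Bfam (.inr (.inl (0, 0))) := by
      simp [Bfam]
    rw [this]; exact Bfam_mem_V _
  · rw [h0, h1, h2, h3]
    have : (X 0 ^ 0 * X 1 ^ 0 * X 2 ^ 1 * X 3 ^ 0 : S4) = Bfam (.inl (0, 1)) := by
      simp [Bfam]
    rw [this]; exact Bfam_mem_V _
  · rw [h0, h1, h2, h3]
    have : (X 0 ^ 0 * X 1 ^ 0 * X 2 ^ 0 * X 3 ^ 1 : S4) = Bfam (.inr (.inr 0)) := by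
      simp [Bfam]
    rw [this]; exact Bfam_mem_V _

end Stmt17Aux


/-- The height of an ideal: the infimum of the heights of the primes containing it. -/
noncomputable def idealHeight' (I : Ideal (MvPolynomial (Fin 4) ℚ)) : ℕ∞ :=
  ⨅ P ∈ {P : PrimeSpectrum (MvPolynomial (Fin 4) ℚ) | I ≤ P.asIdeal}, Order.height P

/-- The Hilbert function of `S/I`: `n ↦ dim_ℚ (S/I)_n = dim_ℚ S_n - dim_ℚ I_n`. -/
noncomputable def hilbertFn' (I : Ideal (MvPolynomial (Fin 4) ℚ)) (n : ℕ) : ℕ :=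
  Module.finrank ℚ ↥(homogeneousSubmodule (Fin 4) ℚ n)
    - Module.finrank ℚ ↥(Submodule.restrictScalars ℚ I ⊓ homogeneousSubmodule (Fin 4) ℚ n)

/-- in `S = ℚ[x,y,z,w]`, the ideal `I` of 2×2 minors of the matrix with rows
`(x, y, z, w)` and `(-y, x, -w, z)` is a nondegenerate prime ideal of height 2 with
multiplicity `e(S/I) = 2` (i.e. `S/I` has dimension 2, so its Hilbert polynomial has
degree 1, and its leading coefficient is `2/1! = 2`). -/
theorem stmt_17 (x y z w : MvPolynomial (Fin 4) ℚ)
    (hx : x = X 0) (hy : y = X 1) (hz : z = X 2) (hw : w = X 3)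
    (M : Matrix (Fin 2) (Fin 4) (MvPolynomial (Fin 4) ℚ))
    (hM : M = Matrix.of ![![x, y, z, w], ![-y, x, -w, z]])
    (I : Ideal (MvPolynomial (Fin 4) ℚ))
    (hI : I = Ideal.span {d | ∃ i j : Fin 4, i < j ∧ d = M 0 i * M 1 j - M 0 j * M 1 i}) :
    I.IsPrime ∧
    (∀ f ∈ I, f.IsHomogeneous 1 → f = 0) ∧
    idealHeight' I = 2 ∧
    ∃ p : Polynomial ℚ,
      (∀ᶠ n : ℕ in atTop, (hilbertFn' I n : ℚ) = p.eval (n : ℚ)) ∧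
      p.natDegree = 1 ∧ p.leadingCoeff = 2 := by
  subst hx hy hz hw hM
  have hIeq : I = I17 := by
    rw [hI]
    refine le_antisymm ?_ ?_
    · rw [Ideal.span_le]
      rintro d ⟨i, j, hij, rfl⟩
      fin_cases i <;> fin_cases j
      · exact absurd hij (by decide)
      · exact mem_of_eq mem_pA (by show (X 0 * X 0 - X 1 * (-X 1) : S4) = pA; rw [pA]; ring)
      · exact mem_of_eq mem_pB (by show (X 0 * (-X 3) - X 2 * (-X 1) : S4) = pB; rw [pB]; ring)
      · exact mem_of_eq mem_pC (by show (X 0 * X 2 - X 3 * (-X 1) : S4) = pC; rw [pC]; ring)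
      · exact absurd hij (by decide)
      · exact absurd hij (by decide)
      · exact mem_of_eq (neg_mem mem_pC)
          (by show (X 1 * (-X 3) - X 2 * X 0 : S4) = -pC; rw [pC]; ring)
      · exact mem_of_eq mem_pB (by show (X 1 * X 2 - X 3 * X 0 : S4) = pB; rw [pB]; ring)
      · exact absurd hij (by decide)
      · exact absurd hij (by decide)
      · exact absurd hij (by decide)
      · exact mem_of_eq mem_pE (by show (X 2 * X 2 - X 3 * (-X 3) : S4) = pE; rw [pE]; ring)
      · exact absurd hij (by decide)
      · exact absurd hij (by decide)
      · exact absurd hij (by decide)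
      · exact absurd hij (by decide)
    · rw [I17, Ideal.span_le]
      intro g hg
      simp only [Set.mem_insert_iff, Set.mem_singleton_iff] at hg
      rcases hg with rfl | rfl | rfl | rfl <;> refine Ideal.subset_span ?_
      · exact ⟨0, 1, by decide, by show pA = X 0 * X 0 - X 1 * (-X 1); rw [pA]; ring⟩
      · exact ⟨0, 2, by decide, by show pB = X 0 * (-X 3) - X 2 * (-X 1); rw [pB]; ring⟩
      · exact ⟨0, 3, by decide, by show pC = X 0 * X 2 - X 3 * (-X 1); rw [pC]; ring⟩
      · exact ⟨2, 3, by decide, by show pE = X 2 * X 2 - X 3 * (-X 3); rw [pE]; ring⟩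
  subst hIeq
  refine ⟨I17_prime, fun f hf h1 => JV_inf hf (deg1_in_V h1), ?_, ?_⟩
  · rw [idealHeight']
    have hmem : (⟨I17, I17_prime⟩ : PrimeSpectrum S4) ∈
        {P : PrimeSpectrum S4 | I17 ≤ P.asIdeal} := by
      show I17 ≤ (⟨I17, I17_prime⟩ : PrimeSpectrum S4).asIdeal
      exact le_rfl
    refine le_antisymm ?_ ?_
    · exact le_trans (iInf₂_le _ hmem) (le_of_eq height_eq_two)
    · refine le_iInf₂ fun P hP => ?_
      rw [← height_eq_two]
      exact Order.height_mono hP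
  · refine ⟨Polynomial.C 2 * Polynomial.X + Polynomial.C 2, ?_, ?_, ?_⟩
    · refine Filter.eventually_atTop.mpr ⟨1, fun n hn => ?_⟩
      have hval := hilb_eq n hn
      have hfn : hilbertFn' I17 n = 2 * n + 2 := by
        show Module.finrank ℚ (Sn n) -
          Module.finrank ℚ (J17 ⊓ Sn n : Submodule ℚ S4) = 2 * n + 2
        rw [hval]
        omega
      rw [hfn]
      push_cast
      simp only [Polynomial.eval_add, Polynomial.eval_mul, Polynomial.eval_C, Polynomial.eval_X]
      try ring
    · compute_degree!
    · have hdeg : (Polynomial.C (2:ℚ) * Polynomial.X + Polynomial.C 2).natDegree = 1 := by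
        compute_degree!
      rw [Polynomial.leadingCoeff, hdeg]
      simp
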